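/- Let T_{4n} be the dicyclic group of order 4n with n ≥ 2. Then Γ_CCC(T_{4n}) is always a cograph and a chordal graph; moreover, if n is odd (and n ≥ 3), then Γ_CCC(T_{4n}) contains an induced 2K_2, so it is neither a split graph nor a threshold graph. -/

import Mathlib

/-- The set of conjugacy classes of non-central elements of `G`. -/
def NCClass (G : Type*) [Group G] : Type _ :=
  {c : ConjClasses G // ∃ x : G, ConjClasses.mk x = c ∧ x ∉ Subgroup.center G}

/-- The conjugacy class graph associated to a property `P` of subgroups:
two distinct non-central conjugacy classes are adjacent iff they have
representatives `a`, `b` with `P ⟨a, b⟩`. -/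
def classGraph (G : Type*) [Group G] (P : Subgroup G → Prop) :
    SimpleGraph (NCClass G) where
  Adj c d := c ≠ d ∧ ∃ a b : G, ConjClasses.mk a = c.1 ∧ ConjClasses.mk b = d.1 ∧
    P (Subgroup.closure {a, b})
  symm := by
    constructor
    rintro c d ⟨hne, a, b, ha, hb, hP⟩
    refine ⟨hne.symm, b, a, hb, ha, ?_⟩
    rwa [Set.pair_comm]
  loopless := by constructor; rintro c ⟨hne, -⟩; exact hne rfl

/-- The commuting conjugacy class graph `Γ_CCC(G)`. -/
def cccGraph (G : Type*) [Group G] : SimpleGraph (NCClass G) :=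
  classGraph G (fun H => ∀ x ∈ H, ∀ y ∈ H, x * y = y * x)

/-- The nilpotent conjugacy class graph `Γ_NCC(G)`. -/
def nccGraph (G : Type*) [Group G] : SimpleGraph (NCClass G) :=
  classGraph G (fun H => Group.IsNilpotent H)

/-- The solvable conjugacy class graph `Γ_SCC(G)`. -/
def sccGraph (G : Type*) [Group G] : SimpleGraph (NCClass G) :=
  classGraph G (fun H => IsSolvable H)

/-- A graph contains an induced path `P₄` on four vertices. -/
def HasInducedP4 {V : Type*} (Γ : SimpleGraph V) : Prop :=
  ∃ a b c d : V, a ≠ b ∧ a ≠ c ∧ a ≠ d ∧ b ≠ c ∧ b ≠ d ∧ c ≠ d ∧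
    Γ.Adj a b ∧ Γ.Adj b c ∧ Γ.Adj c d ∧ ¬Γ.Adj a c ∧ ¬Γ.Adj a d ∧ ¬Γ.Adj b d

/-- A graph is a cograph iff it has no induced `P₄`. -/
def IsCograph {V : Type*} (Γ : SimpleGraph V) : Prop := ¬ HasInducedP4 Γ

/-- A graph contains an induced cycle `Cₙ`. -/
def HasInducedCycle {V : Type*} (Γ : SimpleGraph V) (n : ℕ) : Prop :=
  ∃ f : ZMod n → V, Function.Injective f ∧
    ∀ i j : ZMod n, Γ.Adj (f i) (f j) ↔ (j = i + 1 ∨ i = j + 1)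

/-- A graph is chordal iff it has no induced cycle `Cₙ` for `n ≥ 4`. -/
def IsChordal {V : Type*} (Γ : SimpleGraph V) : Prop :=
  ∀ n : ℕ, 4 ≤ n → ¬ HasInducedCycle Γ n

/-- A graph contains an induced `2K₂`. -/
def Has2K2 {V : Type*} (Γ : SimpleGraph V) : Prop :=
  ∃ a b c d : V, a ≠ b ∧ a ≠ c ∧ a ≠ d ∧ b ≠ c ∧ b ≠ d ∧ c ≠ d ∧
    Γ.Adj a b ∧ Γ.Adj c d ∧ ¬Γ.Adj a c ∧ ¬Γ.Adj a d ∧ ¬Γ.Adj b c ∧ ¬Γ.Adj b d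

/-- A graph contains an induced claw `K_{1,3}`: a vertex with three pairwise
non-adjacent neighbours. -/
def HasClaw {V : Type*} (Γ : SimpleGraph V) : Prop :=
  ∃ v a b c : V, a ≠ b ∧ a ≠ c ∧ b ≠ c ∧
    Γ.Adj v a ∧ Γ.Adj v b ∧ Γ.Adj v c ∧ ¬Γ.Adj a b ∧ ¬Γ.Adj a c ∧ ¬Γ.Adj b c

/-- A graph is claw-free iff it has no induced `K_{1,3}`. -/
def IsClawFree {V : Type*} (Γ : SimpleGraph V) : Prop := ¬ HasClaw Γ

/-- A graph is split iff it has no induced `C₄`, `C₅` or `2K₂`. -/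
def IsSplit {V : Type*} (Γ : SimpleGraph V) : Prop :=
  ¬ HasInducedCycle Γ 4 ∧ ¬ HasInducedCycle Γ 5 ∧ ¬ Has2K2 Γ

/-- A graph is threshold iff it has no induced `P₄`, `C₄`, `C₅` or `2K₂`. -/
def IsThreshold {V : Type*} (Γ : SimpleGraph V) : Prop :=
  ¬ HasInducedP4 Γ ∧ ¬ HasInducedCycle Γ 4 ∧ ¬ HasInducedCycle Γ 5 ∧ ¬ Has2K2 Γ

/-- An EPPO group: every non-identity element has prime power order. -/
def IsEPPO (G : Type*) [Group G] : Prop :=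
  ∀ g : G, g ≠ 1 → IsPrimePow (orderOf g)


section QuatLemmas
open QuaternionGroup

variable {n : ℕ}

lemma zmod_ne' {m a b : ℕ} (ha : a < m) (hb : b < m) (hab : a ≠ b) :
    (a : ZMod m) ≠ (b : ZMod m) := by
  intro h
  rw [ZMod.natCast_eq_natCast_iff, Nat.ModEq, Nat.mod_eq_of_lt ha, Nat.mod_eq_of_lt hb] at h
  exact hab h

lemma comm_ax {i j : ZMod (2*n)} : a i * xa j = xa j * a i ↔ i + i = 0 := by
  rw [a_mul_xa, xa_mul_a, xa.injEq]
  constructor <;> intro h <;> linear_combination -h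

lemma comm_xx {i j : ZMod (2*n)} : xa i * xa j = xa j * xa i ↔ i - j = j - i := by
  rw [xa_mul_xa, xa_mul_xa, a.injEq]
  constructor <;> intro h <;> linear_combination -h

lemma a_mem_center_iff {i : ZMod (2*n)} :
    a i ∈ Subgroup.center (QuaternionGroup n) ↔ i + i = 0 := by
  rw [Subgroup.mem_center_iff]
  constructor
  · intro h
    exact (comm_ax (j := 0)).mp (h (xa 0)).symm
  · intro h g
    rcases g with j | j
    · rw [a_mul_a, a_mul_a, add_comm]
    · exact (comm_ax.mpr h).symm

lemma xa_not_mem_center (hn : 2 ≤ n) (j : ZMod (2*n)) :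
    xa j ∉ Subgroup.center (QuaternionGroup n) := by
  rw [Subgroup.mem_center_iff]
  intro h
  have h1 := (comm_ax (i := 1) (j := j)).mp (h (a 1))
  have h2 : ((2 : ℕ) : ZMod (2*n)) ≠ ((0 : ℕ) : ZMod (2*n)) :=
    zmod_ne' (by omega) (by omega) (by omega)
  apply h2
  push_cast
  linear_combination h1

lemma conj_a (z : QuaternionGroup n) (j : ZMod (2*n)) :
    z * a j * z⁻¹ = a j ∨ z * a j * z⁻¹ = a (-j) := by
  rcases z with i | i
  · left
    show a i * a j * a (-i) = a j
    rw [a_mul_a, a_mul_a]; ring_nf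
  · right
    show xa i * a j * xa ((n : ZMod (2*n)) + i) = a (-j)
    rw [xa_mul_a, xa_mul_xa, a.injEq]
    have h2 : ((2*n : ℕ) : ZMod (2*n)) = 0 := ZMod.natCast_self _
    push_cast at h2
    linear_combination h2

lemma rep_a {g : QuaternionGroup n} {j : ZMod (2*n)}
    (h : ConjClasses.mk g = ConjClasses.mk (a j)) : g = a j ∨ g = a (-j) := by
  rw [ConjClasses.mk_eq_mk_iff_isConj] at h
  obtain ⟨z, hz⟩ := h.symm
  have hg : g = (z : QuaternionGroup n) * a j * (z : QuaternionGroup n)⁻¹ :=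
    eq_mul_inv_iff_mul_eq.mpr hz.eq.symm
  rw [hg]; exact conj_a _ j

/-- parity map -/
def par (n : ℕ) : ZMod (2*n) →+* ZMod 2 := ZMod.castHom (Dvd.intro n rfl) (ZMod 2)

lemma conj_xa (z : QuaternionGroup n) (j : ZMod (2*n)) :
    ∃ k : ZMod (2*n), z * xa j * z⁻¹ = xa k ∧ par n k = par n j := by
  rcases z with i | i
  · refine ⟨j - (i + i), ?_, ?_⟩
    · show a i * xa j * a (-i) = _
      rw [a_mul_xa, xa_mul_a, xa.injEq]; ring
    · have h1 : par n (i + i) = 0 := by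
        rw [map_add]; exact (by decide : ∀ x : ZMod 2, x + x = 0) _
      rw [map_sub, h1, sub_zero]
  · refine ⟨i + i - j, ?_, ?_⟩
    · show xa i * xa j * xa ((n : ZMod (2*n)) + i) = _
      rw [xa_mul_xa, a_mul_xa, xa.injEq]; ring
    · have h1 : par n (i + i) = 0 := by
        rw [map_add]; exact (by decide : ∀ x : ZMod 2, x + x = 0) _
      have h2 : ∀ x : ZMod 2, -x = x := by decide
      rw [map_sub, h1, zero_sub, h2]

lemma rep_xa {g : QuaternionGroup n} {j : ZMod (2*n)}
    (h : ConjClasses.mk g = ConjClasses.mk (xa j)) :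
    ∃ k : ZMod (2*n), g = xa k ∧ par n k = par n j := by
  rw [ConjClasses.mk_eq_mk_iff_isConj] at h
  obtain ⟨z, hz⟩ := h.symm
  have hg : g = (z : QuaternionGroup n) * xa j * (z : QuaternionGroup n)⁻¹ :=
    eq_mul_inv_iff_mul_eq.mpr hz.eq.symm
  rw [hg]; exact conj_xa _ j

lemma mk_xa_01 [NeZero n] (j : ZMod (2*n)) :
    ConjClasses.mk (xa j) = ConjClasses.mk (xa 0) ∨
    ConjClasses.mk (xa j) = ConjClasses.mk (xa 1) := by
  haveI : NeZero (2*n) := ⟨by have := NeZero.pos n; omega⟩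
  have hj : ((j.val : ℕ) : ZMod (2*n)) = j := ZMod.natCast_rightInverse j
  rcases Nat.even_or_odd j.val with ⟨m, hm⟩ | ⟨m, hm⟩
  · left
    rw [ConjClasses.mk_eq_mk_iff_isConj]
    refine ⟨⟨a (m : ZMod (2*n)), a (-(m : ZMod (2*n))),
      by rw [a_mul_a, add_neg_cancel]; exact one_def.symm,
      by rw [a_mul_a, neg_add_cancel]; exact one_def.symm⟩, ?_⟩
    show a (m : ZMod (2*n)) * xa j = xa 0 * a m
    rw [a_mul_xa, xa_mul_a, xa.injEq, zero_add]
    have hjm : j = (m : ZMod (2*n)) + m := by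
      rw [← hj, hm]; push_cast; ring
    linear_combination hjm
  · right
    rw [ConjClasses.mk_eq_mk_iff_isConj]
    refine ⟨⟨a (m : ZMod (2*n)), a (-(m : ZMod (2*n))),
      by rw [a_mul_a, add_neg_cancel]; exact one_def.symm,
      by rw [a_mul_a, neg_add_cancel]; exact one_def.symm⟩, ?_⟩
    show a (m : ZMod (2*n)) * xa j = xa 1 * a m
    rw [a_mul_xa, xa_mul_a, xa.injEq]
    have hjm : j = (m : ZMod (2*n)) + m + 1 := by
      rw [← hj, hm]; push_cast; ring
    linear_combination hjm

lemma mk_xa_ne [NeZero n] :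
    ConjClasses.mk (xa (0 : ZMod (2*n))) ≠ ConjClasses.mk (xa 1) := by
  intro h
  obtain ⟨k, hk, hpar⟩ := rep_xa h.symm
  rw [xa.injEq] at hk
  rw [← hk, map_zero, map_one] at hpar
  exact absurd hpar (by decide)

end QuatLemmas

section GenLemmas
variable {G : Type*} [Group G]

lemma closure_pair_comm {g h : G} (hc : g * h = h * g) :
    ∀ x ∈ Subgroup.closure {g, h}, ∀ y ∈ Subgroup.closure {g, h}, x * y = y * x := by
  intro x hx y hy
  have key : ∀ z : G, z * g = g * z → z * h = h * z →
      Subgroup.closure {g, h} ≤ Subgroup.centralizer {z} := by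
    intro z hzg hzh
    rw [Subgroup.closure_le]
    rintro w (rfl | rfl) <;> rw [SetLike.mem_coe, Subgroup.mem_centralizer_iff] <;>
      rintro u rfl
    · exact hzg
    · exact hzh
  have hmem : x ∈ Subgroup.centralizer {g, h} := by
    refine (Subgroup.closure_le _).mpr ?_ hx
    rintro w (rfl | rfl) <;> rw [SetLike.mem_coe, Subgroup.mem_centralizer_iff] <;>
      rintro u (rfl | rfl)
    · rfl
    · exact hc.symm
    · exact hc
    · rfl
  rw [Subgroup.mem_centralizer_iff] at hmem
  have hle := key x (hmem g (by simp)).symm (hmem h (by simp)).symm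
  have hmem2 := hle hy
  rw [Subgroup.mem_centralizer_iff] at hmem2
  exact hmem2 x rfl

lemma center_conj_invariant {x y : G} (h : ConjClasses.mk x = ConjClasses.mk y)
    (hx : x ∈ Subgroup.center G) : y ∈ Subgroup.center G := by
  rw [ConjClasses.mk_eq_mk_iff_isConj] at h
  obtain ⟨z, hz⟩ := h
  have hy : y = (z : G) * x * (z : G)⁻¹ := eq_mul_inv_iff_mul_eq.mpr hz.eq.symm
  have hxz : (z : G) * x = x * (z : G) := (Subgroup.mem_center_iff.mp hx) z
  have hyx : y = x := by rw [hy, hxz, mul_assoc, mul_inv_cancel, mul_one]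
  rwa [hyx]

lemma ccc_adj_iff {c d : NCClass G} :
    (cccGraph G).Adj c d ↔ c ≠ d ∧ ∃ a b : G, ConjClasses.mk a = c.1 ∧
      ConjClasses.mk b = d.1 ∧ a * b = b * a := by
  constructor
  · rintro ⟨hne, a, b, ha, hb, hP⟩
    exact ⟨hne, a, b, ha, hb,
      hP a (Subgroup.subset_closure (by simp)) b (Subgroup.subset_closure (by simp))⟩
  · rintro ⟨hne, a, b, ha, hb, hc⟩
    exact ⟨hne, a, b, ha, hb, closure_pair_comm hc⟩

lemma rep_noncentral (c : NCClass G) {g : G} (h : ConjClasses.mk g = c.1) :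
    g ∉ Subgroup.center G := by
  obtain ⟨x, hx, hxc⟩ := c.2
  intro hg
  exact hxc (center_conj_invariant (h.trans hx.symm) hg)

lemma three_pigeon {α : Type*} {x y z A B : α} (hx : x = A ∨ x = B) (hy : y = A ∨ y = B)
    (hz : z = A ∨ z = B) (h1 : x ≠ y) (h2 : y ≠ z) (h3 : x ≠ z) : False := by
  rcases hx with rfl | rfl <;> rcases hy with rfl | rfl <;> rcases hz with rfl | rfl <;>
    simp_all

end GenLemmas

open QuaternionGroup in
lemma ccc_trans {n : ℕ} (hn : 2 ≤ n) {c d e : NCClass (QuaternionGroup n)}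
    (h1 : (cccGraph (QuaternionGroup n)).Adj c d)
    (h2 : (cccGraph (QuaternionGroup n)).Adj d e) (hce : c ≠ e) :
    (cccGraph (QuaternionGroup n)).Adj c e := by
  haveI : NeZero n := ⟨by omega⟩
  rw [ccc_adj_iff] at h1 h2 ⊢
  obtain ⟨hcd, g1, g2, hg1, hg2, hc12⟩ := h1
  obtain ⟨hde, k1, k2, hk1, hk2, hc34⟩ := h2
  refine ⟨hce, ?_⟩
  have hg2nc := rep_noncentral d hg2
  have hk1nc := rep_noncentral d hk1
  have hg1nc := rep_noncentral c hg1
  have hk2nc := rep_noncentral e hk2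
  rcases g2 with j2 | j2
  · -- d is an a-class
    have hj2 : j2 + j2 ≠ 0 := fun h => hg2nc (a_mem_center_iff.mpr h)
    obtain ⟨i1, rfl⟩ : ∃ i, g1 = a i := by
      rcases g1 with i | i
      · exact ⟨i, rfl⟩
      · exact absurd (comm_ax.mp hc12.symm) hj2
    obtain ⟨i2, rfl⟩ : ∃ i, k1 = a i := by
      rcases rep_a (hk1.trans hg2.symm) with h | h
      exacts [⟨j2, h⟩, ⟨-j2, h⟩]
    have hi2 : i2 + i2 ≠ 0 := fun h => hk1nc (a_mem_center_iff.mpr h)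
    obtain ⟨i3, rfl⟩ : ∃ i, k2 = a i := by
      rcases k2 with i | i
      · exact ⟨i, rfl⟩
      · exact absurd (comm_ax.mp hc34) hi2
    exact ⟨a i1, a i3, hg1, hk2, by rw [a_mul_a, a_mul_a, add_comm]⟩
  · -- d is an xa-class: impossible to have three distinct classes
    exfalso
    obtain ⟨m1, rfl⟩ : ∃ m, g1 = xa m := by
      rcases g1 with i | i
      · exact absurd (a_mem_center_iff.mpr (comm_ax.mp hc12)) hg1nc
      · exact ⟨i, rfl⟩
    obtain ⟨m2, rfl, -⟩ := rep_xa (hk1.trans hg2.symm)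
    obtain ⟨m3, rfl⟩ : ∃ m, k2 = xa m := by
      rcases k2 with i | i
      · exact absurd (a_mem_center_iff.mpr (comm_ax.mp hc34.symm)) hk2nc
      · exact ⟨i, rfl⟩
    have d1 : c.1 ≠ d.1 := fun h => hcd (Subtype.ext h)
    have d2 : d.1 ≠ e.1 := fun h => hde (Subtype.ext h)
    have d3 : c.1 ≠ e.1 := fun h => hce (Subtype.ext h)
    rw [← hg1, ← hk1] at d1
    rw [← hk1, ← hk2] at d2
    rw [← hg1, ← hk2] at d3
    exact three_pigeon (mk_xa_01 m1) (mk_xa_01 m2) (mk_xa_01 m3) d1 d2 d3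

theorem ccc_dicyclic (n : ℕ) (hn : 2 ≤ n) :
    IsCograph (cccGraph (QuaternionGroup n)) ∧ IsChordal (cccGraph (QuaternionGroup n)) ∧
    (Odd n → Has2K2 (cccGraph (QuaternionGroup n)) ∧
      ¬ IsSplit (cccGraph (QuaternionGroup n)) ∧
      ¬ IsThreshold (cccGraph (QuaternionGroup n))) := by
  haveI : NeZero n := ⟨by omega⟩
  haveI : NeZero (2*n) := ⟨by omega⟩
  have hcog : IsCograph (cccGraph (QuaternionGroup n)) := by
    rintro ⟨p, q, r, s, hpq, hpr, hps, hqr, hqs, hrs, e1, e2, e3, n1, n2, n3⟩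
    exact n1 (ccc_trans hn e1 e2 hpr)
  have hchord : IsChordal (cccGraph (QuaternionGroup n)) := by
    intro m hm hcyc
    obtain ⟨f, hinj, hiff⟩ := hcyc
    have f02 : ((0 : ℕ) : ZMod m) ≠ ((2 : ℕ) : ZMod m) :=
      zmod_ne' (by omega) (by omega) (by omega)
    have f21 : ((2 : ℕ) : ZMod m) ≠ ((1 : ℕ) : ZMod m) :=
      zmod_ne' (by omega) (by omega) (by omega)
    have f03 : ((0 : ℕ) : ZMod m) ≠ ((3 : ℕ) : ZMod m) :=
      zmod_ne' (by omega) (by omega) (by omega)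
    have e1 : (cccGraph (QuaternionGroup n)).Adj (f 0) (f 1) :=
      (hiff 0 1).mpr (Or.inl (by rw [zero_add]))
    have e2 : (cccGraph (QuaternionGroup n)).Adj (f 1) (f 2) :=
      (hiff 1 2).mpr (Or.inl (by norm_num))
    have hne : f 0 ≠ f 2 := fun h => f02 (by simpa using hinj h)
    have e3 := ccc_trans hn e1 e2 hne
    rcases (hiff 0 2).mp e3 with h | h
    · exact f21 (by push_cast; linear_combination h)
    · exact f03 (by push_cast; linear_combination h)
  refine ⟨hcog, hchord, ?_⟩
  intro hodd
  have hn3 : 3 ≤ n := by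
    rcases hodd with ⟨t, ht⟩; omega
  have hne1 : ((2 : ℕ) : ZMod (2*n)) ≠ ((1 : ℕ) : ZMod (2*n)) :=
    zmod_ne' (by omega) (by omega) (by omega)
  have hne2 : ((2 : ℕ) : ZMod (2*n)) ≠ ((0 : ℕ) : ZMod (2*n)) :=
    zmod_ne' (by omega) (by omega) (by omega)
  have hne3 : ((3 : ℕ) : ZMod (2*n)) ≠ ((0 : ℕ) : ZMod (2*n)) :=
    zmod_ne' (by omega) (by omega) (by omega)
  have hne4 : ((4 : ℕ) : ZMod (2*n)) ≠ ((0 : ℕ) : ZMod (2*n)) :=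
    zmod_ne' (by omega) (by omega) (by omega)
  -- the four vertices
  have hv1c : QuaternionGroup.a (1 : ZMod (2*n)) ∉ Subgroup.center (QuaternionGroup n) := by
    intro h
    exact hne2 (by push_cast; linear_combination a_mem_center_iff.mp h)
  have hv2c : QuaternionGroup.a (2 : ZMod (2*n)) ∉ Subgroup.center (QuaternionGroup n) := by
    intro h
    exact hne4 (by push_cast; linear_combination a_mem_center_iff.mp h)
  set v1 : NCClass (QuaternionGroup n) :=
    ⟨ConjClasses.mk (QuaternionGroup.a 1), QuaternionGroup.a 1, rfl, hv1c⟩ with hv1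
  set v2 : NCClass (QuaternionGroup n) :=
    ⟨ConjClasses.mk (QuaternionGroup.a 2), QuaternionGroup.a 2, rfl, hv2c⟩ with hv2
  set v3 : NCClass (QuaternionGroup n) :=
    ⟨ConjClasses.mk (QuaternionGroup.xa 0), QuaternionGroup.xa 0, rfl,
      xa_not_mem_center hn 0⟩ with hv3
  set v4 : NCClass (QuaternionGroup n) :=
    ⟨ConjClasses.mk (QuaternionGroup.xa 1), QuaternionGroup.xa 1, rfl,
      xa_not_mem_center hn 1⟩ with hv4
  -- distinctness
  have d12 : v1 ≠ v2 := by
    intro h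
    have h' : ConjClasses.mk (QuaternionGroup.a (2 : ZMod (2*n))) =
        ConjClasses.mk (QuaternionGroup.a 1) := congrArg Subtype.val h.symm
    rcases rep_a h' with h'' | h''
    · rw [QuaternionGroup.a.injEq] at h''
      exact hne1 (by push_cast; linear_combination h'')
    · rw [QuaternionGroup.a.injEq] at h''
      exact hne3 (by push_cast; linear_combination h'')
  have axa : ∀ (i j : ZMod (2*n)), ConjClasses.mk (QuaternionGroup.a i) ≠
      ConjClasses.mk (QuaternionGroup.xa j) := by
    intro i j h
    rcases rep_a h.symm with h' | h' <;> cases h'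
  have d13 : v1 ≠ v3 := fun h => axa 1 0 (congrArg Subtype.val h)
  have d14 : v1 ≠ v4 := fun h => axa 1 1 (congrArg Subtype.val h)
  have d23 : v2 ≠ v3 := fun h => axa 2 0 (congrArg Subtype.val h)
  have d24 : v2 ≠ v4 := fun h => axa 2 1 (congrArg Subtype.val h)
  have d34 : v3 ≠ v4 := fun h => mk_xa_ne (congrArg Subtype.val h)
  -- edges
  have e12 : (cccGraph (QuaternionGroup n)).Adj v1 v2 :=
    ccc_adj_iff.mpr ⟨d12, QuaternionGroup.a 1, QuaternionGroup.a 2, rfl, rfl,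
      by rw [QuaternionGroup.a_mul_a, QuaternionGroup.a_mul_a, add_comm]⟩
  have e34 : (cccGraph (QuaternionGroup n)).Adj v3 v4 := by
    rw [ccc_adj_iff]
    refine ⟨d34, QuaternionGroup.xa 0, QuaternionGroup.xa (n : ZMod (2*n)), rfl, ?_, ?_⟩
    · show ConjClasses.mk _ = ConjClasses.mk (QuaternionGroup.xa 1)
      obtain ⟨m, hm⟩ := hodd
      rw [ConjClasses.mk_eq_mk_iff_isConj]
      refine ⟨⟨QuaternionGroup.a (m : ZMod (2*n)), QuaternionGroup.a (-(m : ZMod (2*n))),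
        by rw [QuaternionGroup.a_mul_a, add_neg_cancel]; exact QuaternionGroup.one_def.symm,
        by rw [QuaternionGroup.a_mul_a, neg_add_cancel]; exact QuaternionGroup.one_def.symm⟩, ?_⟩
      show QuaternionGroup.a (m : ZMod (2*n)) * QuaternionGroup.xa (n : ZMod (2*n)) =
        QuaternionGroup.xa 1 * QuaternionGroup.a (m : ZMod (2*n))
      rw [QuaternionGroup.a_mul_xa, QuaternionGroup.xa_mul_a, QuaternionGroup.xa.injEq]
      have hcast : ((n : ℕ) : ZMod (2*n)) = 2*(m : ZMod (2*n)) + 1 := by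
        have : (n : ℕ) = 2*m + 1 := hm
        rw [this]; push_cast; ring
      linear_combination hcast
    · apply comm_xx.mpr
      have h0 : ((2*n : ℕ) : ZMod (2*n)) = 0 := ZMod.natCast_self _
      push_cast at h0
      linear_combination -h0
  -- non-edges
  have nonedge : ∀ (i j : ZMod (2*n)) (u w : NCClass (QuaternionGroup n)),
      u.1 = ConjClasses.mk (QuaternionGroup.a i) → w.1 = ConjClasses.mk (QuaternionGroup.xa j) →
      (i + i ≠ 0) → ((-i) + (-i) ≠ 0) → ¬ (cccGraph (QuaternionGroup n)).Adj u w := by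
    intro i j u w hu hw hi hi' hAdj
    rw [ccc_adj_iff] at hAdj
    obtain ⟨-, g, k, hg, hk, hcm⟩ := hAdj
    rw [hw] at hk
    obtain ⟨k', rfl, -⟩ := rep_xa hk
    rw [hu] at hg
    rcases rep_a hg with rfl | rfl
    · exact hi (comm_ax.mp hcm)
    · exact hi' (comm_ax.mp hcm)
  have hii1 : ((1 : ZMod (2*n)) + 1 ≠ 0) := fun h => hne2 (by push_cast; linear_combination h)
  have hii1' : ((-1 : ZMod (2*n)) + (-1) ≠ 0) :=
    fun h => hne2 (by push_cast; linear_combination -h)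
  have hii2 : ((2 : ZMod (2*n)) + 2 ≠ 0) := fun h => hne4 (by push_cast; linear_combination h)
  have hii2' : ((-2 : ZMod (2*n)) + (-2) ≠ 0) :=
    fun h => hne4 (by push_cast; linear_combination -h)
  have n13 : ¬ (cccGraph (QuaternionGroup n)).Adj v1 v3 := nonedge 1 0 v1 v3 rfl rfl hii1 hii1'
  have n14 : ¬ (cccGraph (QuaternionGroup n)).Adj v1 v4 := nonedge 1 1 v1 v4 rfl rfl hii1 hii1'
  have n23 : ¬ (cccGraph (QuaternionGroup n)).Adj v2 v3 := nonedge 2 0 v2 v3 rfl rfl hii2 hii2'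
  have n24 : ¬ (cccGraph (QuaternionGroup n)).Adj v2 v4 := nonedge 2 1 v2 v4 rfl rfl hii2 hii2'
  have h2k2 : Has2K2 (cccGraph (QuaternionGroup n)) :=
    ⟨v1, v2, v3, v4, d12, d13, d14, d23, d24, d34, e12, e34, n13, n14, n23, n24⟩
  exact ⟨h2k2, fun h => h.2.2 h2k2, fun h => h.2.2.2 h2k2⟩
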